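/- For every m ≥ 0 and every integer p ≥ 1, there exists a unique k in the interval [(2p−1)π/4, pπ/2) such that m·sin(2k) + k·cos(2k) = 0. -/

import Mathlib

open Set

/-- For every `m ≥ 0` and every integer `p ≥ 1` there is a unique
`k ∈ [(2p-1)π/4, pπ/2)` with `m·sin(2k) + k·cos(2k) = 0`. -/
theorem unique_transverse_root (m : ℝ) (hm : 0 ≤ m) (p : ℕ) (hp : 1 ≤ p) :
    ∃! k : ℝ, k ∈ Ico ((2 * (p : ℝ) - 1) * Real.pi / 4) ((p : ℝ) * Real.pi / 2) ∧
      m * Real.sin (2 * k) + k * Real.cos (2 * k) = 0 := by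
  have pi_pos := Real.pi_pos
  set a : ℝ := (2 * (p : ℝ) - 1) * Real.pi / 4 with ha_def
  set b : ℝ := (p : ℝ) * Real.pi / 2 with hb_def
  have hp1 : (1 : ℝ) ≤ (p : ℝ) := by exact_mod_cast hp
  have ha_pos : 0 < a := by
    apply div_pos _ (by norm_num)
    apply mul_pos _ pi_pos
    linarith
  have hab : a < b := by
    rw [ha_def, hb_def]
    rw [div_lt_div_iff₀ (by norm_num) (by norm_num)]
    nlinarith
  set ε : ℝ := (-1 : ℝ) ^ (p + 1) with hε_def
  have hεne : ε ≠ 0 := by positivity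
  set g : ℝ → ℝ := fun k => ε * (m * Real.sin (2 * k) + k * Real.cos (2 * k)) with hg_def
  -- key pointwise identity
  have key : ∀ k : ℝ, g k =
      m * Real.sin ((p : ℝ) * Real.pi - 2 * k) - k * Real.cos ((p : ℝ) * Real.pi - 2 * k) := by
    intro k
    rw [hg_def]
    simp only [Real.sin_nat_mul_pi_sub, Real.cos_nat_mul_pi_sub, hε_def, pow_succ]
    ring
  have key' : ∀ k : ℝ, ε * ((2 * m + 1) * Real.cos (2 * k) - 2 * k * Real.sin (2 * k)) =
      -((2 * m + 1) * Real.cos ((p : ℝ) * Real.pi - 2 * k)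
        + 2 * k * Real.sin ((p : ℝ) * Real.pi - 2 * k)) := by
    intro k
    simp only [Real.sin_nat_mul_pi_sub, Real.cos_nat_mul_pi_sub, hε_def, pow_succ]
    ring
  -- endpoint values
  have hta : (p : ℝ) * Real.pi - 2 * a = Real.pi / 2 := by rw [ha_def]; ring
  have htb : (p : ℝ) * Real.pi - 2 * b = 0 := by rw [hb_def]; ring
  have hga : g a = m := by
    rw [key a, hta, Real.sin_pi_div_two, Real.cos_pi_div_two]; ring
  have hgb : g b = -b := by
    rw [key b, htb, Real.sin_zero, Real.cos_zero]; ring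
  -- derivative
  have hd : ∀ k : ℝ, HasDerivAt g
      (ε * ((2 * m + 1) * Real.cos (2 * k) - 2 * k * Real.sin (2 * k))) k := by
    intro k
    have h2k : HasDerivAt (fun x : ℝ => 2 * x) 2 k := by
      simpa using (hasDerivAt_id k).const_mul 2
    have hsin : HasDerivAt (fun x : ℝ => Real.sin (2 * x)) (Real.cos (2 * k) * 2) k :=
      (Real.hasDerivAt_sin (2 * k)).comp k h2k
    have hcos : HasDerivAt (fun x : ℝ => Real.cos (2 * x)) (-Real.sin (2 * k) * 2) k :=
      (Real.hasDerivAt_cos (2 * k)).comp k h2k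
    have hkcos : HasDerivAt (fun x : ℝ => x * Real.cos (2 * x))
        (1 * Real.cos (2 * k) + k * (-Real.sin (2 * k) * 2)) k :=
      (hasDerivAt_id k).mul hcos
    have := ((hsin.const_mul m).add hkcos).const_mul ε
    exact this.congr_deriv (by ring)
  have hcont : ContinuousOn g (Icc a b) := by
    apply Continuous.continuousOn
    fun_prop
  -- g is strictly decreasing on [a,b]
  have hanti : StrictAntiOn g (Icc a b) := by
    apply strictAntiOn_of_deriv_neg (convex_Icc a b) hcont
    intro k hk
    rw [interior_Icc] at hk
    rw [(hd k).deriv, key' k]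
    have ht0 : 0 < (p : ℝ) * Real.pi - 2 * k := by
      have : k < b := hk.2
      rw [hb_def] at this; linarith
    have ht2 : (p : ℝ) * Real.pi - 2 * k < Real.pi / 2 := by
      have : a < k := hk.1
      rw [ha_def] at this
      rw [div_lt_iff₀ (by norm_num : (0:ℝ) < 4)] at this
      linarith
    have hsinpos : 0 < Real.sin ((p : ℝ) * Real.pi - 2 * k) :=
      Real.sin_pos_of_pos_of_lt_pi ht0 (by linarith)
    have hcosnn : 0 ≤ Real.cos ((p : ℝ) * Real.pi - 2 * k) :=
      Real.cos_nonneg_of_mem_Icc ⟨by linarith, le_of_lt ht2⟩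
    have hkpos : 0 < k := lt_trans ha_pos hk.1
    nlinarith
  -- existence via IVT
  have h0mem : (0 : ℝ) ∈ Icc (g b) (g a) := by
    rw [hga, hgb]
    constructor <;> [linarith; exact hm]
  obtain ⟨c, hc, hgc⟩ := intermediate_value_Icc' (le_of_lt hab) hcont h0mem
  have hcb : c ≠ b := by
    intro h; rw [h, hgb] at hgc; linarith
  have hcmem : c ∈ Ico a b := ⟨hc.1, lt_of_le_of_ne hc.2 hcb⟩
  have hfc : m * Real.sin (2 * c) + c * Real.cos (2 * c) = 0 := by
    have : ε * (m * Real.sin (2 * c) + c * Real.cos (2 * c)) = 0 := hgc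
    exact (mul_eq_zero.mp this).resolve_left hεne
  refine ⟨c, ⟨hcmem, hfc⟩, ?_⟩
  rintro k ⟨hk, hfk⟩
  have hgk : g k = 0 := by
    rw [hg_def]; simp only [hfk, mul_zero]
  exact hanti.injOn (⟨hk.1, le_of_lt hk.2⟩ : k ∈ Icc a b)
    (⟨hc.1, hc.2⟩ : c ∈ Icc a b) (by rw [hgk, hgc])
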